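/- arXiv:1511.04271 — 2 statements merged into one kernel-verified Lean document; each statement's English description precedes it below -/
import Mathlib

section
/- Right-handed topological Ackermann lemma (semantic form of Proposition 8.4): let (C, e) be a canonical extension of a bounded distributive lattice A, let α be a closed element of C, let n be a natural number, and for each i < n let β_i, γ_i : C → C be such that β_i is monotone, β_i(e a) is closed for every a ∈ A, and β_i(sInf 𝒞) = sInf (β_i '' 𝒞) for every down-directed family 𝒞 of closed elements of C, while γ_i is antitone, γ_i(e a) is open for every a ∈ A, and γ_i(sInf 𝒞) = sSup (γ_i '' 𝒞) for every down-directed family 𝒞 of closed elements of C. Then the following are equivalent: (1) β_i(α) ≤ γ_i(α) for all i < n; (2) there exists a ∈ A such that α ≤ e a and β_i(e a) ≤ γ_i(e a) for all i < n. -/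
/-- An element is completely join-prime. -/
def CJPrime {C : Type*} [CompleteLattice C] (j : C) : Prop :=
  j ≠ ⊥ ∧ ∀ S : Set C, j ≤ sSup S → ∃ s ∈ S, j ≤ s

/-- An element is completely meet-prime. -/
def CMPrime {C : Type*} [CompleteLattice C] (m : C) : Prop :=
  m ≠ ⊤ ∧ ∀ S : Set C, sInf S ≤ m → ∃ s ∈ S, s ≤ m

/-- ◇_f(u) = ⋁ { f j | j completely join-prime, j ≤ u }. -/
def diam {C D : Type*} [CompleteLattice C] [CompleteLattice D]
    (f : C → D) (u : C) : D :=
  sSup (f '' {j | CJPrime j ∧ j ≤ u})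

/-- ■_f(v) = ⋁ { j | j completely join-prime, f j ≤ v }. -/
def bsq {C D : Type*} [CompleteLattice C] [CompleteLattice D]
    (f : C → D) (v : D) : C :=
  sSup {j | CJPrime j ∧ f j ≤ v}

/-- □_g(u) = ⋀ { g m | m completely meet-prime, u ≤ m }. -/
def boxg {C D : Type*} [CompleteLattice C] [CompleteLattice D]
    (g : C → D) (u : C) : D :=
  sInf (g '' {m | CMPrime m ∧ u ≤ m})

/-- ◆_g(v) = ⋀ { m | m completely meet-prime, v ≤ g m }. -/
def bdiam {C D : Type*} [CompleteLattice C] [CompleteLattice D]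
    (g : C → D) (v : D) : C :=
  sInf {m | CMPrime m ∧ v ≤ g m}

/-- Every element is the sup of the completely join-primes below it. -/
def JoinPerfect (C : Type*) [CompleteLattice C] : Prop :=
  ∀ u : C, u = sSup {j | CJPrime j ∧ j ≤ u}

/-- Every element is the inf of the completely meet-primes above it. -/
def MeetPerfect (C : Type*) [CompleteLattice C] : Prop :=
  ∀ u : C, u = sInf {m | CMPrime m ∧ u ≤ m}

/-- `(C, e)` is a canonical extension of the bounded distributive lattice `A`. -/
structure IsCanonicalExtension {A C : Type*} [DistribLattice A] [BoundedOrder A]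
    [CompleteLattice C] (e : A → C) : Prop where
  injective : Function.Injective e
  map_bot : e ⊥ = ⊥
  map_top : e ⊤ = ⊤
  map_inf : ∀ a b : A, e (a ⊓ b) = e a ⊓ e b
  map_sup : ∀ a b : A, e (a ⊔ b) = e a ⊔ e b
  dense_joinOfMeets : ∀ u : C, ∃ 𝒮 : Set (Set A),
      u = sSup ((fun S => sInf (e '' S)) '' 𝒮)
  dense_meetOfJoins : ∀ u : C, ∃ 𝒮 : Set (Set A),
      u = sInf ((fun S => sSup (e '' S)) '' 𝒮)
  compact : ∀ S T : Set A, sInf (e '' S) ≤ sSup (e '' T) →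
      ∃ F : Finset A, ↑F ⊆ S ∧ ∃ G : Finset A, ↑G ⊆ T ∧ F.inf id ≤ G.sup id

/-- Closed elements of the canonical extension: meets of subsets of `e(A)`. -/
def ClosedElem {A C : Type*} [CompleteLattice C] (e : A → C) (x : C) : Prop :=
  ∃ S : Set A, x = sInf (e '' S)

/-- Open elements of the canonical extension: joins of subsets of `e(A)`. -/
def OpenElem {A C : Type*} [CompleteLattice C] (e : A → C) (x : C) : Prop :=
  ∃ S : Set A, x = sSup (e '' S)

/-- Nonempty downward-directed family. -/
def DownDir {C : Type*} [Preorder C] (𝒞 : Set C) : Prop :=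
  𝒞.Nonempty ∧ ∀ x ∈ 𝒞, ∀ y ∈ 𝒞, ∃ z ∈ 𝒞, z ≤ x ∧ z ≤ y

/-- Nonempty upward-directed family. -/
def UpDir {C : Type*} [Preorder C] (𝒪 : Set C) : Prop :=
  𝒪.Nonempty ∧ ∀ x ∈ 𝒪, ∀ y ∈ 𝒪, ∃ z ∈ 𝒪, x ≤ z ∧ y ≤ z

/-- `h` preserves down-directed meets of closed elements. -/
def ClosedEsakia {A C D : Type*} [CompleteLattice C] [CompleteLattice D]
    (e : A → C) (h : C → D) : Prop :=
  ∀ 𝒞 : Set C, DownDir 𝒞 → (∀ c ∈ 𝒞, ClosedElem e c) →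
    h (sInf 𝒞) = sInf (h '' 𝒞)

/-- `h` preserves up-directed joins of open elements. -/
def OpenEsakia {A C D : Type*} [CompleteLattice C] [CompleteLattice D]
    (e : A → C) (h : C → D) : Prop :=
  ∀ 𝒪 : Set C, UpDir 𝒪 → (∀ o ∈ 𝒪, OpenElem e o) →
    h (sSup 𝒪) = sSup (h '' 𝒪)

/-- Auxiliary: finite infima of elements of the meet-closure of `S` stay in it. -/
lemma aux_inf_mem_stmt18 {A : Type*} [Lattice A] [OrderTop A]
    (S : Set A) {ι : Type*} (s : Finset ι) (f : ι → A)
    (hf : ∀ i ∈ s, ∃ F : Finset A, ↑F ⊆ S ∧ f i = F.inf id) :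
    ∃ F : Finset A, ↑F ⊆ S ∧ s.inf f = F.inf id := by
  classical
  induction s using Finset.induction with
  | empty => exact ⟨∅, by simp⟩
  | @insert i s hi ih =>
    obtain ⟨F, hF, hFi⟩ := hf i (by simp)
    obtain ⟨G, hG, hGi⟩ := ih (fun j hj => hf j (by simp [hj]))
    refine ⟨F ∪ G, ?_, ?_⟩
    · rw [Finset.coe_union]; exact Set.union_subset hF hG
    · simp [Finset.inf_insert, hFi, hGi, Finset.inf_union]

/-- Right-handed topological Ackermann lemma (semantic form of Proposition 8.4). -/
theorem stmt18 {A C : Type*} [DistribLattice A] [BoundedOrder A] [CompleteLattice C]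
    (e : A → C) (hce : IsCanonicalExtension e)
    (α : C) (hα : ClosedElem e α) (n : ℕ) (β γ : Fin n → C → C)
    (hβmono : ∀ i, Monotone (β i))
    (hβcl : ∀ i, ∀ a : A, ClosedElem e (β i (e a)))
    (hβEs : ∀ i, ∀ 𝒞 : Set C, DownDir 𝒞 → (∀ c ∈ 𝒞, ClosedElem e c) →
        β i (sInf 𝒞) = sInf (β i '' 𝒞))
    (hγanti : ∀ i, Antitone (γ i))
    (hγop : ∀ i, ∀ a : A, OpenElem e (γ i (e a)))
    (hγEs : ∀ i, ∀ 𝒞 : Set C, DownDir 𝒞 → (∀ c ∈ 𝒞, ClosedElem e c) →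
        γ i (sInf 𝒞) = sSup (γ i '' 𝒞)) :
    (∀ i, β i α ≤ γ i α) ↔
      ∃ a : A, α ≤ e a ∧ ∀ i, β i (e a) ≤ γ i (e a) := by
  classical
  constructor
  · intro hle
    obtain ⟨S, hS⟩ := hα
    -- e is monotone
    have hemono : Monotone e := by
      intro a b h
      have h2 : e (a ⊓ b) = e a ⊓ e b := hce.map_inf a b
      rw [inf_eq_left.mpr h] at h2
      rw [h2]; exact inf_le_right
    -- e preserves finite infs and sups (Finset version)
    have hefinf : ∀ F : Finset A, e (F.inf id) = F.inf e := by
      intro F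
      induction F using Finset.induction with
      | empty => simpa using hce.map_top
      | @insert a F ha ih => simp [hce.map_inf, ih]
    have hefsup : ∀ F : Finset A, e (F.sup id) = F.sup e := by
      intro F
      induction F using Finset.induction with
      | empty => simpa using hce.map_bot
      | @insert a F ha ih => simp [hce.map_sup, ih]
    -- meet-closure of S
    set T : Set A := {a | ∃ F : Finset A, ↑F ⊆ S ∧ a = F.inf id} with hTdef
    have hST : S ⊆ T := by
      intro a ha
      exact ⟨{a}, by simpa using ha, by simp⟩
    -- the directed family
    set 𝒞 : Set C := e '' T with h𝒞def
    have h𝒞inf : sInf 𝒞 = α := by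
      rw [hS]
      apply le_antisymm
      · exact sInf_le_sInf (Set.image_mono (f := e) hST)
      · apply le_sInf
        rintro c ⟨a, ⟨F, hFS, rfl⟩, rfl⟩
        rw [hefinf]
        apply Finset.le_inf
        intro x hx
        exact sInf_le ⟨x, hFS hx, rfl⟩
    have h𝒞dd : DownDir 𝒞 := by
      constructor
      · exact ⟨e ⊤, ⟨⊤, ⟨∅, by simp⟩, rfl⟩⟩
      · rintro x ⟨a, ⟨F, hF, rfl⟩, rfl⟩ y ⟨b, ⟨G, hG, rfl⟩, rfl⟩
        refine ⟨e ((F ∪ G).inf id), ⟨(F ∪ G).inf id,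
          ⟨F ∪ G, by rw [Finset.coe_union]; exact Set.union_subset hF hG, rfl⟩, rfl⟩, ?_, ?_⟩
        · exact hemono (by rw [Finset.inf_union]; exact inf_le_left)
        · exact hemono (by rw [Finset.inf_union]; exact inf_le_right)
    have h𝒞cl : ∀ c ∈ 𝒞, ClosedElem e c := by
      rintro c ⟨a, _, rfl⟩
      exact ⟨{a}, by simp⟩
    -- key: for each i there is a ∈ T with β i (e a) ≤ γ i (e a)
    have key : ∀ i, ∃ a ∈ T, β i (e a) ≤ γ i (e a) := by
      intro i
      have hβα : β i α = sInf (β i '' 𝒞) := by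
        rw [← h𝒞inf]; exact hβEs i 𝒞 h𝒞dd h𝒞cl
      have hγα : γ i α = sSup (γ i '' 𝒞) := by
        rw [← h𝒞inf]; exact hγEs i 𝒞 h𝒞dd h𝒞cl
      choose Sβ hSβ using hβcl i
      choose Tγ hTγ using hγop i
      set U : Set A := ⋃ a ∈ T, Sβ a with hUdef
      set V : Set A := ⋃ a ∈ T, Tγ a with hVdef
      have h1 : sInf (e '' U) ≤ sInf (β i '' 𝒞) := by
        apply le_sInf
        rintro c ⟨x, ⟨a, haT, rfl⟩, rfl⟩
        rw [hSβ]
        apply sInf_le_sInf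
        apply Set.image_mono
        intro y hy
        exact Set.mem_iUnion₂.mpr ⟨a, haT, hy⟩
      have h2 : sSup (γ i '' 𝒞) ≤ sSup (e '' V) := by
        apply sSup_le
        rintro c ⟨x, ⟨a, haT, rfl⟩, rfl⟩
        rw [hTγ]
        apply sSup_le_sSup
        apply Set.image_mono
        intro y hy
        exact Set.mem_iUnion₂.mpr ⟨a, haT, hy⟩
      have hmain : sInf (e '' U) ≤ sSup (e '' V) :=
        h1.trans ((hβα ▸ (hle i)) |>.trans_eq hγα |>.trans h2)
      obtain ⟨F, hFU, G, hGV, hFG⟩ := hce.compact U V hmain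
      -- choice functions
      have hfc : ∀ x : A, ∃ a : A, x ∈ U → a ∈ T ∧ x ∈ Sβ a := by
        intro x
        by_cases hx : x ∈ U
        · obtain ⟨a, haT, hxa⟩ := Set.mem_iUnion₂.mp hx
          exact ⟨a, fun _ => ⟨haT, hxa⟩⟩
        · exact ⟨⊤, fun h => absurd h hx⟩
      have hgc : ∀ y : A, ∃ b : A, y ∈ V → b ∈ T ∧ y ∈ Tγ b := by
        intro y
        by_cases hy : y ∈ V
        · obtain ⟨b, hbT, hyb⟩ := Set.mem_iUnion₂.mp hy
          exact ⟨b, fun _ => ⟨hbT, hyb⟩⟩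
        · exact ⟨⊤, fun h => absurd h hy⟩
      choose f hf using hfc
      choose g hg using hgc
      -- common lower bound
      set K : Finset A := F.image f ∪ G.image g with hKdef
      have hKT : ∀ k ∈ K, ∃ F' : Finset A, ↑F' ⊆ S ∧ (id k : A) = F'.inf id := by
        intro k hk
        rw [hKdef, Finset.mem_union] at hk
        rcases hk with hk | hk
        · obtain ⟨x, hx, rfl⟩ := Finset.mem_image.mp hk
          exact (hf x (hFU hx)).1
        · obtain ⟨y, hy, rfl⟩ := Finset.mem_image.mp hk
          exact (hg y (hGV hy)).1
      obtain ⟨F', hF'S, hF'⟩ := aux_inf_mem_stmt18 S K id hKT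
      set a : A := K.inf id with hadef
      have haT : a ∈ T := ⟨F', hF'S, hF'⟩
      refine ⟨a, haT, ?_⟩
      have hstep1 : β i (e a) ≤ e (F.inf id) := by
        rw [hefinf F]
        apply Finset.le_inf
        intro x hx
        have hax : a ≤ f x := Finset.inf_le (by
          rw [hKdef, Finset.mem_union]
          exact Or.inl (Finset.mem_image_of_mem f hx))
        calc β i (e a) ≤ β i (e (f x)) := hβmono i (hemono hax)
          _ = sInf (e '' Sβ (f x)) := hSβ (f x)
          _ ≤ e x := sInf_le ⟨x, (hf x (hFU hx)).2, rfl⟩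
      have hstep2 : e (G.sup id) ≤ γ i (e a) := by
        rw [hefsup G]
        apply Finset.sup_le
        intro y hy
        have hay : a ≤ g y := Finset.inf_le (by
          rw [hKdef, Finset.mem_union]
          exact Or.inr (Finset.mem_image_of_mem g hy))
        calc e y ≤ sSup (e '' Tγ (g y)) := le_sSup ⟨y, (hg y (hGV hy)).2, rfl⟩
          _ = γ i (e (g y)) := (hTγ (g y)).symm
          _ ≤ γ i (e a) := hγanti i (hemono hay)
      exact hstep1.trans ((hemono hFG).trans hstep2)
    -- combine over all i
    choose a haT hab using key
    have hmem : ∀ j ∈ (Finset.univ : Finset (Fin n)), ∃ F : Finset A, ↑F ⊆ S ∧ a j = F.inf id :=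
      fun j _ => haT j
    obtain ⟨F', hF'S, hF'⟩ := aux_inf_mem_stmt18 S Finset.univ a hmem
    set b : A := (Finset.univ : Finset (Fin n)).inf a with hbdef
    have hbT : b ∈ T := ⟨F', hF'S, hF'⟩
    refine ⟨b, ?_, ?_⟩
    · rw [← h𝒞inf]; exact sInf_le ⟨b, hbT, rfl⟩
    · intro i
      have hbi : b ≤ a i := Finset.inf_le (Finset.mem_univ i)
      calc β i (e b) ≤ β i (e (a i)) := hβmono i (hemono hbi)
        _ ≤ γ i (e (a i)) := hab i
        _ ≤ γ i (e b) := hγanti i (hemono hbi)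
  · rintro ⟨a, haα, hab⟩ i
    calc β i α ≤ β i (e a) := hβmono i haα
      _ ≤ γ i (e a) := hab i
      _ ≤ γ i α := hγanti i haα
end

section
/- Left-handed topological Ackermann lemma (semantic form of Proposition 8.5): let (C, e) be a canonical extension of a bounded distributive lattice A, let α be an open element of C, let n be a natural number, and for each i < n let β_i, γ_i : C → C be such that β_i is antitone, β_i(e a) is closed for every a ∈ A, and β_i(sSup 𝒪) = sInf (β_i '' 𝒪) for every up-directed family 𝒪 of open elements of C, while γ_i is monotone, γ_i(e a) is open for every a ∈ A, and γ_i(sSup 𝒪) = sSup (γ_i '' 𝒪) for every up-directed family 𝒪 of open elements of C. Then the following are equivalent: (1) β_i(α) ≤ γ_i(α) for all i < n; (2) there exists a ∈ A such that e a ≤ α and β_i(e a) ≤ γ_i(e a) for all i < n. -/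
/-- Left-handed topological Ackermann lemma (semantic form of Proposition 8.5). -/
theorem stmt19 {A C : Type*} [DistribLattice A] [BoundedOrder A] [CompleteLattice C]
    (e : A → C) (hce : IsCanonicalExtension e)
    (α : C) (hα : OpenElem e α) (n : ℕ) (β γ : Fin n → C → C)
    (hβanti : ∀ i, Antitone (β i))
    (hβcl : ∀ i, ∀ a : A, ClosedElem e (β i (e a)))
    (hβEs : ∀ i, ∀ 𝒪 : Set C, UpDir 𝒪 → (∀ o ∈ 𝒪, OpenElem e o) →
        β i (sSup 𝒪) = sInf (β i '' 𝒪))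
    (hγmono : ∀ i, Monotone (γ i))
    (hγop : ∀ i, ∀ a : A, OpenElem e (γ i (e a)))
    (hγEs : ∀ i, ∀ 𝒪 : Set C, UpDir 𝒪 → (∀ o ∈ 𝒪, OpenElem e o) →
        γ i (sSup 𝒪) = sSup (γ i '' 𝒪)) :
    (∀ i, β i α ≤ γ i α) ↔
      ∃ a : A, e a ≤ α ∧ ∀ i, β i (e a) ≤ γ i (e a) := by
  classical
  obtain ⟨S, hS⟩ := hα
  set T : Set A := {a : A | ∃ G : Finset A, ↑G ⊆ S ∧ a = G.sup id} with hT
  have e_mono : Monotone e := by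
    intro a b hab
    have h1 : e b = e a ⊔ e b := by rw [← hce.map_sup, sup_eq_right.mpr hab]
    rw [h1]; exact le_sup_left
  have e_finsup : ∀ G : Finset A, e (G.sup id) = G.sup e := by
    intro G
    have := Finset.comp_sup_eq_sup_comp (s := G) (f := id) e
      (fun x y => hce.map_sup x y) hce.map_bot
    simpa using this
  have e_fininf : ∀ F : Finset A, e (F.inf id) = F.inf e := by
    intro F
    have := Finset.comp_inf_eq_inf_comp (s := F) (f := id) e
      (fun x y => hce.map_inf x y) hce.map_top
    simpa using this
  have hbotT : (⊥ : A) ∈ T := ⟨∅, by simp⟩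
  have hsupT : ∀ a ∈ T, ∀ b ∈ T, a ⊔ b ∈ T := by
    rintro a ⟨Ga, hGa, rfl⟩ b ⟨Gb, hGb, rfl⟩
    exact ⟨Ga ∪ Gb, by
      simp only [Finset.coe_union]
      exact Set.union_subset hGa hGb, by rw [Finset.sup_union]⟩
  have hTle : ∀ a ∈ T, e a ≤ α := by
    rintro a ⟨G, hGS, rfl⟩
    rw [e_finsup, hS]
    exact Finset.sup_le fun g hg => le_sSup ⟨g, hGS hg, rfl⟩
  have hST : S ⊆ T := fun s hs => ⟨{s}, by simpa using hs, by simp⟩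
  have hdir : UpDir (e '' T) := by
    constructor
    · exact ⟨e ⊥, ⊥, hbotT, rfl⟩
    · rintro _ ⟨a, ha, rfl⟩ _ ⟨b, hb, rfl⟩
      exact ⟨e (a ⊔ b), ⟨a ⊔ b, hsupT a ha b hb, rfl⟩,
        e_mono le_sup_left, e_mono le_sup_right⟩
  have hop : ∀ o ∈ e '' T, OpenElem e o := by
    rintro _ ⟨a, _, rfl⟩
    exact ⟨{a}, by simp⟩
  have hαT : α = sSup (e '' T) := by
    apply le_antisymm
    · rw [hS]; exact sSup_le_sSup (Set.image_mono (f := e) hST)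
    · exact sSup_le (by rintro _ ⟨a, ha, rfl⟩; exact hTle a ha)
  have Sfspec : ∀ i (a : A), β i (e a) = sInf (e '' Classical.choose (hβcl i a)) :=
    fun i a => Classical.choose_spec (hβcl i a)
  have Tfspec : ∀ i (a : A), γ i (e a) = sSup (e '' Classical.choose (hγop i a)) :=
    fun i a => Classical.choose_spec (hγop i a)
  set Sf : Fin n → A → Set A := fun i a => Classical.choose (hβcl i a) with hSf
  set Tf : Fin n → A → Set A := fun i a => Classical.choose (hγop i a) with hTf
  constructor
  · intro h
    have key : ∀ i, ∃ c ∈ T, β i (e c) ≤ γ i (e c) := by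
      intro i
      have h1 : sInf (e '' ⋃ a ∈ T, Sf i a) ≤ sSup (e '' ⋃ a ∈ T, Tf i a) := by
        have hb : sInf (e '' ⋃ a ∈ T, Sf i a) ≤ β i α := by
          rw [hαT, hβEs i (e '' T) hdir hop]
          apply le_sInf
          rintro _ ⟨_, ⟨a, ha, rfl⟩, rfl⟩
          rw [Sfspec i a]
          exact sInf_le_sInf (Set.image_mono (f := e)
            (Set.subset_biUnion_of_mem (u := fun a => Sf i a) ha))
        have hg : γ i α ≤ sSup (e '' ⋃ a ∈ T, Tf i a) := by
          rw [hαT, hγEs i (e '' T) hdir hop]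
          apply sSup_le
          rintro _ ⟨_, ⟨a, ha, rfl⟩, rfl⟩
          rw [Tfspec i a]
          exact sSup_le_sSup (Set.image_mono (f := e)
            (Set.subset_biUnion_of_mem (u := fun a => Tf i a) ha))
        exact hb.trans ((h i).trans hg)
      obtain ⟨F, hF, G, hG, hFG⟩ := hce.compact _ _ h1
      have hFmem : ∀ f ∈ F, ∃ a, a ∈ T ∧ f ∈ Sf i a := by
        intro f hf
        have := hF hf
        simpa using this
      have hGmem : ∀ g ∈ G, ∃ a, a ∈ T ∧ g ∈ Tf i a := by
        intro g hg
        have := hG hg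
        simpa using this
      choose af hafT haf using hFmem
      choose bg hbgT hbg using hGmem
      set c : A := (F.attach.sup fun f => af f f.2) ⊔ (G.attach.sup fun g => bg g g.2)
        with hc
      have hcT : c ∈ T := by
        apply hsupT
        · exact Finset.sup_induction hbotT hsupT (fun f _ => hafT f f.2)
        · exact Finset.sup_induction hbotT hsupT (fun g _ => hbgT g g.2)
      refine ⟨c, hcT, ?_⟩
      have h2 : β i (e c) ≤ e (F.inf id) := by
        rw [e_fininf]
        apply Finset.le_inf
        intro f hf
        have hle : af f hf ≤ c :=
          le_trans (Finset.le_sup (f := fun x => af x.1 x.2) (Finset.mem_attach F ⟨f, hf⟩)) le_sup_left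
        calc β i (e c) ≤ β i (e (af f hf)) := hβanti i (e_mono hle)
          _ = sInf (e '' Sf i (af f hf)) := Sfspec i _
          _ ≤ e f := sInf_le ⟨f, haf f hf, rfl⟩
      have h3 : e (G.sup id) ≤ γ i (e c) := by
        rw [e_finsup]
        apply Finset.sup_le
        intro g hg
        have hle : bg g hg ≤ c :=
          le_trans (Finset.le_sup (f := fun x => bg x.1 x.2) (Finset.mem_attach G ⟨g, hg⟩)) le_sup_right
        calc e g ≤ sSup (e '' Tf i (bg g hg)) := le_sSup ⟨g, hbg g hg, rfl⟩
          _ = γ i (e (bg g hg)) := (Tfspec i _).symm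
          _ ≤ γ i (e c) := hγmono i (e_mono hle)
      exact h2.trans ((e_mono hFG).trans h3)
    choose cf hcfT hcf using key
    set c : A := Finset.univ.sup cf with hcdef
    have hcT : c ∈ T := Finset.sup_induction hbotT hsupT (fun i _ => hcfT i)
    refine ⟨c, hTle c hcT, fun i => ?_⟩
    have hle : cf i ≤ c := Finset.le_sup (Finset.mem_univ i)
    calc β i (e c) ≤ β i (e (cf i)) := hβanti i (e_mono hle)
      _ ≤ γ i (e (cf i)) := hcf i
      _ ≤ γ i (e c) := hγmono i (e_mono hle)
  · rintro ⟨a, haα, hab⟩ i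
    calc β i α ≤ β i (e a) := hβanti i haα
      _ ≤ γ i (e a) := hab i
      _ ≤ γ i α := hγmono i haα
end
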